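/- Let (M,ω) be a connected symplectic manifold with symplectic action of a connected Lie group G, J : M̃ → 𝔤* the lifted momentum map, Γ = π₁(M,z₀), and ℋ = J(Γ) the Hamiltonian holonomy. A cover p : (N,y₀) → (M,z₀) is Hamiltonian (i.e. J descends to a well-defined momentum map on N = M̃/Γ_N) if and only if J(Γ_N) = 0, where Γ_N = p_*(π₁(N,y₀)). Equivalently, the Hamiltonian covers of M correspond exactly to the subgroups of Γ₀ = ker(J|_Γ). -/

import Mathlib

/-- abstract form of the classification of Hamiltonian covers.  Let
`Γ = π₁(M,z₀)` act (by deck transformations) on the universal cover `X = M̃`, let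
`J : X → 𝔤*` be the lifted momentum map and `φ = J|_Γ` its restriction to the fibre
over the base point, a homomorphism into `(𝔤*,+)` satisfying `J(γ·x) = φ(γ) + J(x)`.
For a subgroup `Γ₁ = Γ_N` (so that `N = M̃/Γ_N`), the cover `N` is Hamiltonian — i.e.
`J` descends to a well-defined momentum map on `M̃/Γ_N` — if and only if `φ(Γ_N) = 0`,
equivalently if and only if `Γ_N` is contained in `Γ₀ = ker(J|_Γ)`. -/
theorem stmt12 {Γ X A : Type*} [Group Γ] [MulAction Γ X] [Nonempty X] [AddCommGroup A]
    (φ : Γ → A) (hφ : ∀ γ δ : Γ, φ (γ * δ) = φ γ + φ δ)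
    (J : X → A) (hJ : ∀ (γ : Γ) (x : X), J (γ • x) = φ γ + J x)
    (Γ₁ : Subgroup Γ) :
    ((∃ J' : Quotient (MulAction.orbitRel Γ₁ X) → A,
        ∀ x : X, J' (Quotient.mk (MulAction.orbitRel Γ₁ X) x) = J x) ↔
      ∀ γ ∈ Γ₁, φ γ = 0)
    ∧ ((∀ γ ∈ Γ₁, φ γ = 0) ↔ (Γ₁ : Set Γ) ⊆ {γ : Γ | φ γ = 0}) := by
  constructor
  · constructor
    · rintro ⟨J', hJ'⟩ γ hγ
      obtain ⟨x⟩ := ‹Nonempty X›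
      have h1 : Quotient.mk (MulAction.orbitRel Γ₁ X) ((γ : Γ) • x) =
          Quotient.mk (MulAction.orbitRel Γ₁ X) x :=
        Quotient.sound ⟨⟨γ, hγ⟩, rfl⟩
      have := hJ' ((γ : Γ) • x)
      rw [h1, hJ' x, hJ γ x] at this
      exact right_eq_add.mp this
    · intro h
      refine ⟨Quotient.lift J ?_, fun x => rfl⟩
      rintro x y ⟨g, rfl⟩
      show J ((g : Γ) • y) = J y
      rw [hJ, h g g.2, zero_add]
  · constructor
    · intro h γ hγ; exact h γ hγ
    · intro h γ hγ; exact h hγ
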